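/- The internal (loss-code) encoding unitary maps computational basis inputs to products of GHZ-type states: for every x = (x₁,…,x₅) ∈ {0,1}⁵, U_enc(|x⟩ ⊗ |00000⟩ ⊗ |00000⟩) = 2^{−3/2} · ⊗_{d=0}^{2} (|x₁x₂x₃x₄ 0⟩ + (−1)^{x₅} |x̄₁x̄₂x̄₃x̄₄ 1⟩), where x̄ᵢ := 1 − xᵢ. In particular, the all-zero input is encoded as the tensor product of three 5-qubit GHZ states 2^{−3/2}(|00000⟩ + |11111⟩)^{⊗3}. -/

import Mathlib

open scoped BigOperators

noncomputable section
set_option maxHeartbeats 1600000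

/-- The 15-qubit state space `V₁₅ = (Fin 15 → Fin 2) → ℂ`, organized as three blocks
`(0), (1), (2)` of five qubits each. -/
abbrev V15 : Type := EuclideanSpace ℂ (Fin 15 → Fin 2)

/-- The tensor position of qubit `i+1` (`i : Fin 5`, 0-indexed) of block `d`. -/
def pos (d : Fin 3) (i : Fin 5) : Fin 15 :=
  ⟨5 * d.val + i.val, by have hd := d.isLt; have hi := i.isLt; omega⟩

/-- The CNOT unitary on `V₁₅` with control `a` and target `b`. -/
def CNOT (a b : Fin 15) (ψ : V15) : V15 :=
  WithLp.toLp 2 (fun y => ψ (if y a = 1 then Function.update y b (1 - y b) else y))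

/-- The Hadamard unitary acting on position `a` of `V₁₅`. -/
def Had (a : Fin 15) (ψ : V15) : V15 :=
  WithLp.toLp 2 (fun y => (Real.sqrt 2 : ℂ)⁻¹ *
    ∑ b : Fin 2, (-1 : ℂ) ^ (b.val * (y a).val) * ψ (Function.update y a b))

/-- The internal encoding unitary of the quantum loss-correcting code:
`U_enc = (∏_{d=0}^{2} ∏_{i=1}^{4} C_{5(d),i(d)}) ∘ (∏_{d=0}^{2} H_{5(d)}) ∘
(∏_{d=1}^{2} ∏_{i=1}^{5} C_{i(0),i(d)})`, products applied right to left
(the CNOTs within each product pairwise commute). -/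
def Uenc : V15 → V15 :=
  (CNOT (pos 0 4) (pos 0 0) ∘ CNOT (pos 0 4) (pos 0 1) ∘ CNOT (pos 0 4) (pos 0 2) ∘
     CNOT (pos 0 4) (pos 0 3) ∘
   CNOT (pos 1 4) (pos 1 0) ∘ CNOT (pos 1 4) (pos 1 1) ∘ CNOT (pos 1 4) (pos 1 2) ∘
     CNOT (pos 1 4) (pos 1 3) ∘
   CNOT (pos 2 4) (pos 2 0) ∘ CNOT (pos 2 4) (pos 2 1) ∘ CNOT (pos 2 4) (pos 2 2) ∘
     CNOT (pos 2 4) (pos 2 3)) ∘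
  (Had (pos 0 4) ∘ Had (pos 1 4) ∘ Had (pos 2 4)) ∘
  (CNOT (pos 0 0) (pos 1 0) ∘ CNOT (pos 0 1) (pos 1 1) ∘ CNOT (pos 0 2) (pos 1 2) ∘
     CNOT (pos 0 3) (pos 1 3) ∘ CNOT (pos 0 4) (pos 1 4) ∘
   CNOT (pos 0 0) (pos 2 0) ∘ CNOT (pos 0 1) (pos 2 1) ∘ CNOT (pos 0 2) (pos 2 2) ∘
     CNOT (pos 0 3) (pos 2 3) ∘ CNOT (pos 0 4) (pos 2 4))

/-- The computational basis input `|x⟩ ⊗ |00000⟩ ⊗ |00000⟩` of `V₁₅`. -/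
def basisInput (x : Fin 5 → Fin 2) : V15 :=
  WithLp.toLp 2 (fun y => if (∀ i : Fin 5, y (pos 0 i) = x i) ∧ (∀ i : Fin 5, y (pos 1 i) = 0)
      ∧ (∀ i : Fin 5, y (pos 2 i) = 0) then 1 else 0)

/-- The amplitude at `y` of the block-`d` factor `|x₁x₂x₃x₄0⟩ + (−1)^{x₅}|x̄₁x̄₂x̄₃x̄₄1⟩`,
where `x̄ᵢ = 1 − xᵢ`. -/
def ghzBlockAmp (x : Fin 5 → Fin 2) (d : Fin 3) (y : Fin 15 → Fin 2) : ℂ :=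
  if (∀ i : Fin 4, y (pos d i.castSucc) = x i.castSucc) ∧ y (pos d 4) = 0 then 1
  else if (∀ i : Fin 4, y (pos d i.castSucc) = 1 - x i.castSucc) ∧ y (pos d 4) = 1 then
    (-1 : ℂ) ^ (x 4).val
  else 0

/-- The product of GHZ-type states `⊗_{d=0}^{2} (|x₁x₂x₃x₄0⟩ + (−1)^{x₅}|x̄₁x̄₂x̄₃x̄₄1⟩)`. -/
def ghz3 (x : Fin 5 → Fin 2) : V15 := WithLp.toLp 2 (fun y => ∏ d : Fin 3, ghzBlockAmp x d y)

lemma fin2' (a : Fin 2) : a = 0 ∨ a = 1 := by omega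
@[simp] lemma val30' : ((0:Fin 3):ℕ) = 0 := rfl
@[simp] lemma val31' : ((1:Fin 3):ℕ) = 1 := rfl
@[simp] lemma val32' : ((2:Fin 3):ℕ) = 2 := rfl
@[simp] lemma val40' : ((0:Fin 4):ℕ) = 0 := rfl
@[simp] lemma val41' : ((1:Fin 4):ℕ) = 1 := rfl
@[simp] lemma val42' : ((2:Fin 4):ℕ) = 2 := rfl
@[simp] lemma val43' : ((3:Fin 4):ℕ) = 3 := rfl
@[simp] lemma val50' : ((0:Fin 5):ℕ) = 0 := rfl
@[simp] lemma val51' : ((1:Fin 5):ℕ) = 1 := rfl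
@[simp] lemma val52' : ((2:Fin 5):ℕ) = 2 := rfl
@[simp] lemma val53' : ((3:Fin 5):ℕ) = 3 := rfl
@[simp] lemma val54' : ((4:Fin 5):ℕ) = 4 := rfl
@[simp] lemma cs0' : (0:Fin 4).castSucc = (0:Fin 5) := rfl
@[simp] lemma cs1' : (1:Fin 4).castSucc = (1:Fin 5) := rfl
@[simp] lemma cs2' : (2:Fin 4).castSucc = (2:Fin 5) := rfl
@[simp] lemma cs3' : (3:Fin 4).castSucc = (3:Fin 5) := rfl

lemma CNOT_apply' (a b : Fin 15) (ψ : V15) (y : Fin 15 → Fin 2) :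
    CNOT a b ψ y = ψ (Function.update y b (y b + y a)) := by
  unfold CNOT
  rw [WithLp.ofLp_toLp]
  rcases fin2' (y a) with h | h <;> rw [h]
  · rw [if_neg (by decide), add_zero, Function.update_eq_self]
  · have : (1 : Fin 2) - y b = y b + 1 := by omega
    rw [if_pos rfl, this]

lemma forall5' (P : Fin 5 → Prop) : (∀ i, P i) ↔ P 0 ∧ P 1 ∧ P 2 ∧ P 3 ∧ P 4 := by
  constructor
  · intro h; exact ⟨h 0, h 1, h 2, h 3, h 4⟩
  · rintro ⟨h0,h1,h2,h3,h4⟩ i; fin_cases i <;> assumption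

lemma forall4' (P : Fin 4 → Prop) : (∀ i, P i) ↔ P 0 ∧ P 1 ∧ P 2 ∧ P 3 := by
  constructor
  · intro h; exact ⟨h 0, h 1, h 2, h 3⟩
  · rintro ⟨h0,h1,h2,h3⟩ i; fin_cases i <;> assumption

/-- State after the first layer of CNOTs. -/
def state1 (x : Fin 5 → Fin 2) : V15 :=
  WithLp.toLp 2 (fun y => if (∀ i : Fin 5, y (pos 0 i) = x i) ∧ (∀ i : Fin 5, y (pos 1 i) = x i)
      ∧ (∀ i : Fin 5, y (pos 2 i) = x i) then 1 else 0)

/-- State after the Hadamard layer. -/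
def state2 (x : Fin 5 → Fin 2) : V15 :=
  WithLp.toLp 2 fun y => ((Real.sqrt 2 : ℂ)⁻¹)^3 *
    ((-1 : ℂ) ^ ((x 4).val * ((y (pos 0 4)).val + (y (pos 1 4)).val + (y (pos 2 4)).val))) *
    (if (∀ i : Fin 4, y (pos 0 i.castSucc) = x i.castSucc)
        ∧ (∀ i : Fin 4, y (pos 1 i.castSucc) = x i.castSucc)
        ∧ (∀ i : Fin 4, y (pos 2 i.castSucc) = x i.castSucc) then 1 else 0)

lemma stageC (x : Fin 5 → Fin 2) :
    (CNOT (pos 0 0) (pos 1 0) ∘ CNOT (pos 0 1) (pos 1 1) ∘ CNOT (pos 0 2) (pos 1 2) ∘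
     CNOT (pos 0 3) (pos 1 3) ∘ CNOT (pos 0 4) (pos 1 4) ∘
     CNOT (pos 0 0) (pos 2 0) ∘ CNOT (pos 0 1) (pos 2 1) ∘ CNOT (pos 0 2) (pos 2 2) ∘
     CNOT (pos 0 3) (pos 2 3) ∘ CNOT (pos 0 4) (pos 2 4)) (basisInput x) = state1 x := by
  ext y
  simp only [Function.comp_apply, CNOT_apply', basisInput, state1, WithLp.ofLp_toLp]
  refine if_congr ?_ rfl rfl
  simp only [forall5', pos, Function.update_apply, Fin.mk.injEq,
    val30', val31', val32', val50', val51', val52', val53', val54']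
  norm_num
  omega

lemma stageH (x : Fin 5 → Fin 2) :
    (Had (pos 0 4) ∘ Had (pos 1 4) ∘ Had (pos 2 4)) (state1 x) = state2 x := by
  ext y
  simp only [Function.comp_apply, Had, Fin.sum_univ_two, state1, state2, WithLp.ofLp_toLp, forall5', forall4',
    pos, Function.update_apply, Fin.mk.injEq, cs0', cs1', cs2', cs3',
    val30', val31', val32', val50', val51', val52', val53', val54']
  norm_num
  rcases fin2' (x 4) with h | h <;> rw [h] <;> simp <;> ring_nf

lemma blockAmp (x : Fin 5 → Fin 2) (d : Fin 3) (y : Fin 15 → Fin 2) :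
    ghzBlockAmp x d y = (-1 : ℂ) ^ ((x 4).val * (y (pos d 4)).val) *
      (if (∀ i : Fin 4, y (pos d i.castSucc) + y (pos d 4) = x i.castSucc) then 1 else 0) := by
  rcases fin2' (y (pos d 4)) with h | h <;> rw [ghzBlockAmp, h]
  case inl => simp
  case inr =>
    have he : ∀ i : Fin 4, (y (pos d i.castSucc) + 1 = x i.castSucc ↔
        y (pos d i.castSucc) = 1 - x i.castSucc) := fun i => by omega
    simp only [he, and_true, and_false, if_false]
    rw [if_neg (by simp)]
    by_cases hc : ∀ i : Fin 4, y (pos d i.castSucc) = 1 - x i.castSucc <;> simp [hc]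

lemma ghz3_eq (x : Fin 5 → Fin 2) (y : Fin 15 → Fin 2) :
    ghz3 x y = (-1 : ℂ) ^ ((x 4).val * (y (pos 0 4)).val) *
      (-1 : ℂ) ^ ((x 4).val * (y (pos 1 4)).val) *
      (-1 : ℂ) ^ ((x 4).val * (y (pos 2 4)).val) *
      (if (∀ i : Fin 4, y (pos 0 i.castSucc) + y (pos 0 4) = x i.castSucc)
          ∧ (∀ i : Fin 4, y (pos 1 i.castSucc) + y (pos 1 4) = x i.castSucc)
          ∧ (∀ i : Fin 4, y (pos 2 i.castSucc) + y (pos 2 4) = x i.castSucc) then 1 else 0) := by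
  rw [ghz3, WithLp.ofLp_toLp, Fin.prod_univ_three, blockAmp, blockAmp, blockAmp]
  by_cases h0 : ∀ i : Fin 4, y (pos 0 i.castSucc) + y (pos 0 4) = x i.castSucc <;>
  by_cases h1 : ∀ i : Fin 4, y (pos 1 i.castSucc) + y (pos 1 4) = x i.castSucc <;>
  by_cases h2 : ∀ i : Fin 4, y (pos 2 i.castSucc) + y (pos 2 4) = x i.castSucc <;>
  simp [h0, h1, h2]

lemma bigCNOT (ψ : V15) (y : Fin 15 → Fin 2) :
    (CNOT (pos 0 4) (pos 0 0) ∘ CNOT (pos 0 4) (pos 0 1) ∘ CNOT (pos 0 4) (pos 0 2) ∘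
     CNOT (pos 0 4) (pos 0 3) ∘
     CNOT (pos 1 4) (pos 1 0) ∘ CNOT (pos 1 4) (pos 1 1) ∘ CNOT (pos 1 4) (pos 1 2) ∘
     CNOT (pos 1 4) (pos 1 3) ∘
     CNOT (pos 2 4) (pos 2 0) ∘ CNOT (pos 2 4) (pos 2 1) ∘ CNOT (pos 2 4) (pos 2 2) ∘
     CNOT (pos 2 4) (pos 2 3)) ψ y = ψ (fun p =>
      if p.val = 4 ∨ p.val = 9 ∨ p.val = 14 then y p
      else if p.val < 5 then y p + y (pos 0 4)
      else if p.val < 10 then y p + y (pos 1 4)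
      else y p + y (pos 2 4)) := by
  simp only [Function.comp_apply, CNOT_apply']
  refine congrArg (WithLp.ofLp ψ) ?_
  funext p
  fin_cases p <;>
    norm_num [pos, Function.update_apply, Fin.ext_iff, cs0', cs1', cs2', cs3',
      val30', val31', val32', val40', val41', val42', val43',
      val50', val51', val52', val53', val54']

lemma stageA (x : Fin 5 → Fin 2) :
    (CNOT (pos 0 4) (pos 0 0) ∘ CNOT (pos 0 4) (pos 0 1) ∘ CNOT (pos 0 4) (pos 0 2) ∘
     CNOT (pos 0 4) (pos 0 3) ∘
     CNOT (pos 1 4) (pos 1 0) ∘ CNOT (pos 1 4) (pos 1 1) ∘ CNOT (pos 1 4) (pos 1 2) ∘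
     CNOT (pos 1 4) (pos 1 3) ∘
     CNOT (pos 2 4) (pos 2 0) ∘ CNOT (pos 2 4) (pos 2 1) ∘ CNOT (pos 2 4) (pos 2 2) ∘
     CNOT (pos 2 4) (pos 2 3)) (state2 x) = ((Real.sqrt 2 : ℂ)⁻¹ ^ 3) • ghz3 x := by
  ext y
  rw [PiLp.smul_apply, smul_eq_mul, ghz3_eq, bigCNOT, state2, WithLp.ofLp_toLp]
  norm_num [Nat.mul_add, pow_add, forall4', pos, Fin.ext_iff, cs0', cs1', cs2', cs3',
    val30', val31', val32', val40', val41', val42', val43',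
    val50', val51', val52', val53', val54']

/-- The internal (loss-code) encoding unitary maps computational basis inputs to products
of GHZ-type states: `U_enc(|x⟩ ⊗ |00000⟩ ⊗ |00000⟩) =
2^{−3/2} ⊗_{d=0}^{2} (|x₁x₂x₃x₄0⟩ + (−1)^{x₅}|x̄₁x̄₂x̄₃x̄₄1⟩)`. In particular the all-zero
input is encoded as `2^{−3/2} (|00000⟩ + |11111⟩)^{⊗3}`. -/
theorem Uenc_basis_ghz (x : Fin 5 → Fin 2) :
    Uenc (basisInput x) = ((Real.sqrt 2 : ℂ)⁻¹ ^ 3) • ghz3 x := by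
  unfold Uenc
  have h1 := stageC x
  have h2 := stageH x
  have h3 := stageA x
  simp only [Function.comp_apply] at h1 h2 h3 ⊢
  rw [h1, h2, h3]
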